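/- Under the same hypotheses but with g' < 0 on ]0,+∞[ (g positive, decreasing, C¹), any positive Neumann or periodic solution of (φ(u'))' + a(t)g(u) = 0 with stepwise weight a forces ∫₀ᵀ a(t) dt = a₊τ - a₋(T-τ) > 0. -/

import Mathlib

open Set MeasureTheory intervalIntegral

section Aux
open Filter

private lemma aux_left' {f f' : ℝ → ℝ} {b c : ℝ} (hbc : b < c)
    (hd : ∀ t ∈ Icc b c, HasDerivAt f (f' t) t)
    (hanti : ∀ x ∈ Ico b c, ∀ y ∈ Ico b c, x ≤ y → f' y ≤ f' x) :
    Tendsto f' (nhdsWithin c (Iio c)) (nhds (f' c)) := by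
  rw [Metric.tendsto_nhdsWithin_nhds]
  intro ε hε
  have hslope := hasDerivAt_iff_tendsto_slope.1 (hd c ⟨hbc.le, le_rfl⟩)
  rw [Metric.tendsto_nhdsWithin_nhds] at hslope
  obtain ⟨δ₁, hδ₁, H⟩ := hslope (ε/3) (by linarith)
  obtain ⟨δ₂, hδ₂, hδ₂1, hδ₂b⟩ : ∃ δ₂, 0 < δ₂ ∧ δ₂ ≤ δ₁ ∧ δ₂ ≤ c - b :=
    ⟨min δ₁ (c-b), lt_min hδ₁ (by linarith), min_le_left _ _, min_le_right _ _⟩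
  refine ⟨δ₂/8, by linarith, ?_⟩
  intro x hx hdx
  rw [Real.dist_eq] at hdx
  have hxc : x < c := hx
  have hdx' := abs_lt.1 hdx
  have hxlb : c - δ₂/8 < x := by linarith [hdx'.1]
  have hbx : b < x := by linarith
  obtain ⟨r, hrdef⟩ : ∃ r : ℝ, r = c - δ₂/2 := ⟨_, rfl⟩
  have hbr : b < r := by rw [hrdef]; linarith
  have hrx : r < x := by rw [hrdef]; linarith
  have hrc : r < c := by rw [hrdef]; linarith
  have hsub1 : Icc x c ⊆ Icc b c := Icc_subset_Icc hbx.le le_rfl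
  obtain ⟨ξ, hξ, hξeq⟩ := exists_hasDerivAt_eq_slope f f' hxc
    (fun t ht => (hd t (hsub1 ht)).continuousAt.continuousWithinAt)
    (fun t ht => hd t (hsub1 ⟨ht.1.le, ht.2.le⟩))
  have hsub2 : Icc r x ⊆ Icc b c := Icc_subset_Icc hbr.le hxc.le
  obtain ⟨η, hη, hηeq⟩ := exists_hasDerivAt_eq_slope f f' hrx
    (fun t ht => (hd t (hsub2 ht)).continuousAt.continuousWithinAt)
    (fun t ht => hd t (hsub2 ⟨ht.1.le, ht.2.le⟩))
  have Hx := H (x := x) (ne_of_lt hxc) (by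
    rw [Real.dist_eq]
    exact lt_of_lt_of_le (by rw [abs_lt]; constructor <;> linarith : |x - c| < δ₂) hδ₂1)
  have Hr := H (x := r) (ne_of_lt hrc) (by
    rw [Real.dist_eq, hrdef, show c - δ₂/2 - c = -(δ₂/2) by ring, abs_neg,
      abs_of_pos (by linarith)]; linarith)
  rw [slope_def_field, Real.dist_eq] at Hx Hr
  have hxabs := abs_lt.1 Hx
  have hrabs := abs_lt.1 Hr
  have hξval : f' ξ = (f x - f c) / (x - c) := by
    rw [hξeq, div_eq_div_iff (by linarith : c - x ≠ 0) (by linarith : x - c ≠ 0)]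
    ring
  have h1 : f' ξ ≤ f' x := hanti x ⟨hbx.le, hxc⟩ ξ ⟨by linarith [hξ.1], hξ.2⟩ hξ.1.le
  have hlow : f' c - ε/3 < f' x := by rw [hξval] at h1; linarith [hxabs.1]
  have h2 : f' x ≤ f' η := hanti η ⟨by linarith [hη.1], by linarith [hη.2]⟩ x ⟨hbx.le, hxc⟩ hη.2.le
  have hfx : f x - f c = (x - c) * ((f x - f c)/(x - c)) := by
    rw [mul_comm, div_mul_cancel₀ _ (by linarith : x - c ≠ 0)]
  have hfr : f r - f c = (r - c) * ((f r - f c)/(r - c)) := by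
    rw [mul_comm, div_mul_cancel₀ _ (by linarith : r - c ≠ 0)]
  have hηval : f' η = (f x - f r) / (x - r) := hηeq
  have hup : f' x < f' c + ε := by
    have hxr : 0 < x - r := by linarith
    have key : (f x - f r) / (x - r) < f' c + ε := by
      rw [div_lt_iff₀ hxr]
      have e1 : f x - f r = (x - c) * ((f x - f c)/(x - c)) - (r - c) * ((f r - f c)/(r - c)) := by
        linarith [hfx, hfr]
      rw [e1, hrdef]
      rw [hrdef] at hrabs
      nlinarith [hxabs.1, hxabs.2, hrabs.1, hrabs.2, hdx'.1, hdx'.2, hδ₂, hε, hxc]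
    calc f' x ≤ f' η := h2
      _ = (f x - f r) / (x - r) := hηval
      _ < f' c + ε := key
  rw [Real.dist_eq, abs_lt]
  constructor <;> linarith

private lemma aux_right' {f f' : ℝ → ℝ} {b c : ℝ} (hbc : b < c)
    (hd : ∀ t ∈ Icc b c, HasDerivAt f (f' t) t)
    (hmono : ∀ x ∈ Ioc b c, ∀ y ∈ Ioc b c, x ≤ y → f' x ≤ f' y) :
    Tendsto f' (nhdsWithin b (Ioi b)) (nhds (f' b)) := by
  rw [Metric.tendsto_nhdsWithin_nhds]
  intro ε hε
  have hslope := hasDerivAt_iff_tendsto_slope.1 (hd b ⟨le_rfl, hbc.le⟩)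
  rw [Metric.tendsto_nhdsWithin_nhds] at hslope
  obtain ⟨δ₁, hδ₁, H⟩ := hslope (ε/3) (by linarith)
  obtain ⟨δ₂, hδ₂, hδ₂1, hδ₂b⟩ : ∃ δ₂, 0 < δ₂ ∧ δ₂ ≤ δ₁ ∧ δ₂ ≤ c - b :=
    ⟨min δ₁ (c-b), lt_min hδ₁ (by linarith), min_le_left _ _, min_le_right _ _⟩
  refine ⟨δ₂/8, by linarith, ?_⟩
  intro x hx hdx
  rw [Real.dist_eq] at hdx
  have hbx : b < x := hx
  have hdx' := abs_lt.1 hdx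
  have hxub : x < b + δ₂/8 := by linarith [hdx'.2]
  have hxc : x < c := by linarith
  obtain ⟨r, hrdef⟩ : ∃ r : ℝ, r = b + δ₂/2 := ⟨_, rfl⟩
  have hrc : r < c := by rw [hrdef]; linarith
  have hxr : x < r := by rw [hrdef]; linarith
  have hbr : b < r := by rw [hrdef]; linarith
  have hsub1 : Icc b x ⊆ Icc b c := Icc_subset_Icc le_rfl hxc.le
  obtain ⟨ξ, hξ, hξeq⟩ := exists_hasDerivAt_eq_slope f f' hbx
    (fun t ht => (hd t (hsub1 ht)).continuousAt.continuousWithinAt)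
    (fun t ht => hd t (hsub1 ⟨ht.1.le, ht.2.le⟩))
  have hsub2 : Icc x r ⊆ Icc b c := Icc_subset_Icc hbx.le hrc.le
  obtain ⟨η, hη, hηeq⟩ := exists_hasDerivAt_eq_slope f f' hxr
    (fun t ht => (hd t (hsub2 ht)).continuousAt.continuousWithinAt)
    (fun t ht => hd t (hsub2 ⟨ht.1.le, ht.2.le⟩))
  have Hx := H (x := x) (ne_of_gt hbx) (by
    rw [Real.dist_eq, abs_of_pos (by linarith : (0:ℝ) < x - b)]; linarith)
  have Hr := H (x := r) (ne_of_gt hbr) (by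
    rw [Real.dist_eq, hrdef, show b + δ₂/2 - b = δ₂/2 by ring, abs_of_pos (by linarith)]; linarith)
  rw [slope_def_field, Real.dist_eq] at Hx Hr
  have hxabs := abs_lt.1 Hx
  have hrabs := abs_lt.1 Hr
  have h1 : f' ξ ≤ f' x := hmono ξ ⟨hξ.1, by linarith [hξ.2]⟩ x ⟨hbx, hxc.le⟩ hξ.2.le
  have hlow : f' b - ε/3 < f' x := by rw [hξeq] at h1; linarith [hxabs.1]
  have h2 : f' x ≤ f' η := hmono x ⟨hbx, hxc.le⟩ η ⟨by linarith [hη.1], by linarith [hη.2]⟩ hη.1.le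
  have hfx : f x - f b = (x - b) * ((f x - f b)/(x - b)) := by
    rw [mul_comm, div_mul_cancel₀ _ (by linarith : x - b ≠ 0)]
  have hfr : f r - f b = (r - b) * ((f r - f b)/(r - b)) := by
    rw [mul_comm, div_mul_cancel₀ _ (by linarith : r - b ≠ 0)]
  have hup : f' x < f' b + ε := by
    have hrx : 0 < r - x := by linarith
    have key : (f r - f x) / (r - x) < f' b + ε := by
      rw [div_lt_iff₀ hrx]
      have e1 : f r - f x = (r - b) * ((f r - f b)/(r - b)) - (x - b) * ((f x - f b)/(x - b)) := by
        linarith [hfx, hfr]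
      rw [e1, hrdef]
      rw [hrdef] at hrabs
      nlinarith [hxabs.1, hxabs.2, hrabs.1, hrabs.2, hdx'.1, hdx'.2, hδ₂, hε, hbx]
    calc f' x ≤ f' η := h2
      _ = (f r - f x) / (r - x) := hηeq
      _ < f' b + ε := key
  rw [Real.dist_eq, abs_lt]
  constructor <;> linarith

end Aux

/-- STATEMENT 10: necessary condition `∫₀ᵀ a > 0` for positive Neumann/periodic
solutions of `(φ(u'))' + a(t) g(u) = 0` with decreasing `g`. -/
theorem stmt_11 (ap am τ T : ℝ) (hap : 0 < ap) (ham : 0 < am)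
    (hτ : 0 < τ) (hτT : τ < T)
    (a : ℝ → ℝ)
    (ha : ∀ t, (t ∈ Ico 0 τ → a t = ap) ∧ (t ∈ Ico τ T → a t = -am))
    (Ω : Set ℝ) (hΩopen : IsOpen Ω) (hΩconn : Ω.OrdConnected) (h0Ω : (0 : ℝ) ∈ Ω)
    (φ : ℝ → ℝ) (hφcont : ContinuousOn φ Ω)
    (hφinj : InjOn φ Ω) (hφsurj : SurjOn φ Ω univ)
    (hφ0 : φ 0 = 0) (hφsign : ∀ s ∈ Ω, s ≠ 0 → s * φ s > 0)
    (g g' : ℝ → ℝ)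
    (hgpos : ∀ x : ℝ, 0 < x → 0 < g x)
    (hg' : ∀ x : ℝ, 0 < x → HasDerivAt g (g' x) x)
    (hg'neg : ∀ x : ℝ, 0 < x → g' x < 0)
    (u u' : ℝ → ℝ)
    (hupos : ∀ t ∈ Icc 0 T, 0 < u t)
    (hu : ∀ t ∈ Icc 0 T, HasDerivAt u (u' t) t)
    (hu'Ω : ∀ t ∈ Icc 0 T, u' t ∈ Ω)
    (heq : ∀ t ∈ Icc 0 T, t ≠ τ →
      HasDerivAt (fun s => φ (u' s)) (-(a t * g (u t))) t)
    (hbc : (u' 0 = 0 ∧ u' T = 0) ∨ (u 0 = u T ∧ u' 0 = u' T)) :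
    (∫ t in (0 : ℝ)..T, a t) = ap * τ - am * (T - τ) ∧
      0 < ap * τ - am * (T - τ) := by
  have hT : (0:ℝ) < T := hτ.trans hτT
  have hτmem : τ ∈ Icc (0:ℝ) T := ⟨hτ.le, hτT.le⟩
  -- φ is strictly monotone on Ω
  have hφmono : StrictMonoOn φ Ω := by
    intro x hx y hy hxy
    have hc : min x 0 ∈ Ω := by
      rcases le_total x 0 with h|h
      · rwa [min_eq_left h]
      · rwa [min_eq_right h]
    have hd : max y 0 ∈ Ω := by
      rcases le_total y 0 with h|h
      · rwa [max_eq_right h]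
      · rwa [max_eq_left h]
    have hsub : Icc (min x 0) (max y 0) ⊆ Ω := hΩconn.out hc hd
    have h0m : (0:ℝ) ∈ Icc (min x 0) (max y 0) := ⟨min_le_right _ _, le_max_right _ _⟩
    have hxm : x ∈ Icc (min x 0) (max y 0) := ⟨min_le_left _ _, le_trans hxy.le (le_max_left _ _)⟩
    have hym : y ∈ Icc (min x 0) (max y 0) := ⟨le_trans (min_le_left _ _) hxy.le, le_max_left _ _⟩
    have hcd : min x 0 ≤ max y 0 := h0m.1.trans h0m.2
    rcases ContinuousOn.strictMonoOn_of_injOn_Icc' hcd (hφcont.mono hsub) (hφinj.mono hsub)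
      with hm|hanti
    · exact hm hxm hym hxy
    · exfalso
      rcases lt_trichotomy y 0 with hy0|hy0|hy0
      · have hx0 : x < 0 := hxy.trans hy0
        have hsx := hφsign x hx (ne_of_lt hx0)
        have h := hanti hxm h0m hx0
        rw [hφ0] at h
        nlinarith
      · have hx0 : x < 0 := by rw [← hy0]; exact hxy
        have hsx := hφsign x hx (ne_of_lt hx0)
        have h := hanti hxm h0m hx0
        rw [hφ0] at h
        nlinarith
      · have hsy := hφsign y hy (ne_of_gt hy0)
        have h := hanti h0m hym hy0
        rw [hφ0] at h
        nlinarith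
  have hgu : ∀ t ∈ Icc (0:ℝ) T, 0 < g (u t) := fun t ht => hgpos _ (hupos t ht)
  -- strict decrease of φ ∘ u' on [0, τ)
  have hvdec : ∀ x ∈ Ico (0:ℝ) τ, ∀ y ∈ Ico (0:ℝ) τ, x < y → φ (u' y) < φ (u' x) := by
    intro x hx y hy hxy
    have hsub : Icc x y ⊆ Icc 0 T := Icc_subset_Icc hx.1 (by linarith [hy.2])
    have hne : ∀ t ∈ Icc x y, t ≠ τ := fun t ht => ne_of_lt (lt_of_le_of_lt ht.2 hy.2)
    obtain ⟨cc, hcc, hceq⟩ := exists_hasDerivAt_eq_slope (fun s => φ (u' s))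
      (fun t => -(a t * g (u t))) hxy
      (fun t ht => (heq t (hsub ht) (hne t ht)).continuousAt.continuousWithinAt)
      (fun t ht => heq t (hsub ⟨ht.1.le, ht.2.le⟩) (hne t ⟨ht.1.le, ht.2.le⟩))
    have hccmem : cc ∈ Icc (0:ℝ) T := hsub ⟨hcc.1.le, hcc.2.le⟩
    have hac : a cc = ap := (ha cc).1 ⟨le_trans hx.1 hcc.1.le, lt_trans hcc.2 hy.2⟩
    have hgc := hgu cc hccmem
    have hceq' : -(a cc * g (u cc)) = (φ (u' y) - φ (u' x)) / (y - x) := hceq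
    rw [hac, eq_comm, div_eq_iff (by linarith : y - x ≠ 0)] at hceq'
    have hprod : 0 < ap * g (u cc) * (y - x) := mul_pos (mul_pos hap hgc) (by linarith)
    nlinarith
  -- strict increase of φ ∘ u' on (τ, T]
  have hvinc : ∀ x ∈ Ioc τ T, ∀ y ∈ Ioc τ T, x < y → φ (u' x) < φ (u' y) := by
    intro x hx y hy hxy
    have hsub : Icc x y ⊆ Icc 0 T := Icc_subset_Icc (by linarith [hx.1]) hy.2
    have hne : ∀ t ∈ Icc x y, t ≠ τ := fun t ht => ne_of_gt (lt_of_lt_of_le hx.1 ht.1)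
    obtain ⟨cc, hcc, hceq⟩ := exists_hasDerivAt_eq_slope (fun s => φ (u' s))
      (fun t => -(a t * g (u t))) hxy
      (fun t ht => (heq t (hsub ht) (hne t ht)).continuousAt.continuousWithinAt)
      (fun t ht => heq t (hsub ⟨ht.1.le, ht.2.le⟩) (hne t ⟨ht.1.le, ht.2.le⟩))
    have hccmem : cc ∈ Icc (0:ℝ) T := hsub ⟨hcc.1.le, hcc.2.le⟩
    have hac : a cc = -am := (ha cc).2 ⟨le_trans hx.1.le hcc.1.le, lt_of_lt_of_le hcc.2 hy.2⟩
    have hgc := hgu cc hccmem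
    have hceq' : -(a cc * g (u cc)) = (φ (u' y) - φ (u' x)) / (y - x) := hceq
    rw [hac, eq_comm, div_eq_iff (by linarith : y - x ≠ 0)] at hceq'
    have hprod : 0 < am * g (u cc) * (y - x) := mul_pos (mul_pos ham hgc) (by linarith)
    nlinarith
  have hIcoIcc : ∀ x ∈ Ico (0:ℝ) τ, x ∈ Icc (0:ℝ) T :=
    fun x hx => ⟨hx.1, le_of_lt (lt_trans hx.2 hτT)⟩
  have hIocIcc : ∀ x ∈ Ioc τ T, x ∈ Icc (0:ℝ) T :=
    fun x hx => ⟨le_of_lt (lt_trans hτ hx.1), hx.2⟩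
  -- u' is antitone on [0,τ) and monotone on (τ,T]
  have hu'anti : ∀ x ∈ Ico (0:ℝ) τ, ∀ y ∈ Ico (0:ℝ) τ, x ≤ y → u' y ≤ u' x := by
    intro x hx y hy hxy
    rcases eq_or_lt_of_le hxy with rfl|h
    · exact le_rfl
    by_contra hlt
    push_neg at hlt
    have h1 := hφmono (hu'Ω x (hIcoIcc x hx)) (hu'Ω y (hIcoIcc y hy)) hlt
    have h2 := hvdec x hx y hy h
    linarith
  have hu'mono : ∀ x ∈ Ioc τ T, ∀ y ∈ Ioc τ T, x ≤ y → u' x ≤ u' y := by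
    intro x hx y hy hxy
    rcases eq_or_lt_of_le hxy with rfl|h
    · exact le_rfl
    by_contra hlt
    push_neg at hlt
    have h1 := hφmono (hu'Ω y (hIocIcc y hy)) (hu'Ω x (hIocIcc x hx)) hlt
    have h2 := hvinc x hx y hy h
    linarith
  -- u' is continuous at τ
  have hleft : Filter.Tendsto u' (nhdsWithin τ (Iio τ)) (nhds (u' τ)) :=
    aux_left' hτ (fun t ht => hu t (Icc_subset_Icc le_rfl hτT.le ht)) hu'anti
  have hright : Filter.Tendsto u' (nhdsWithin τ (Ioi τ)) (nhds (u' τ)) :=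
    aux_right' hτT (fun t ht => hu t (Icc_subset_Icc hτ.le le_rfl ht)) hu'mono
  have hu'c : ContinuousAt u' τ := by
    unfold ContinuousAt
    rw [← nhdsLT_sup_nhdsGE τ]
    refine Filter.tendsto_sup.mpr ⟨hleft, ?_⟩
    have hIci : (Ici τ : Set ℝ) = insert τ (Ioi τ) := Ioi_insert.symm
    rw [show (nhdsWithin τ (Ici τ)) = nhdsWithin τ (insert τ (Ioi τ)) by rw [hIci],
      nhdsWithin_insert]
    exact Filter.tendsto_sup.mpr ⟨tendsto_pure_nhds u' τ, hright⟩
  -- continuity of φ ∘ u' on [0, T]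
  have hvcont : ContinuousOn (fun t => φ (u' t)) (Icc (0:ℝ) T) := by
    intro t ht
    by_cases htτ : t = τ
    · subst htτ
      have hφct : ContinuousAt φ (u' t) := hφcont.continuousAt (hΩopen.mem_nhds (hu'Ω t ht))
      exact (hφct.comp hu'c).continuousWithinAt
    · exact (heq t ht htτ).continuousAt.continuousWithinAt
  have hgucont : ContinuousOn (fun t => g (u t)) (Icc (0:ℝ) T) := fun t ht =>
    ((hg' (u t) (hupos t ht)).continuousAt.comp (hu t ht).continuousAt).continuousWithinAt
  set G : ℝ → ℝ := fun t => φ (u' t) / g (u t) with hGdef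
  set A : ℝ → ℝ := fun t => ap * min t τ - am * max (t - τ) 0 with hAdef
  set F : ℝ → ℝ := fun t => G t + A t with hFdef
  set W : ℝ → ℝ := fun t => -(φ (u' t) * g' (u t) * u' t) / (g (u t))^2 with hWdef
  have hGcont : ContinuousOn G (Icc (0:ℝ) T) :=
    hvcont.div hgucont (fun t ht => (hgu t ht).ne')
  have hAcont : Continuous A := by
    apply Continuous.sub
    · exact continuous_const.mul (continuous_id.min continuous_const)
    · exact continuous_const.mul ((continuous_id.sub continuous_const).max continuous_const)
  have hFcont : ContinuousOn F (Icc (0:ℝ) T) := hGcont.add hAcont.continuousOn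
  have hGderiv : ∀ t ∈ Icc (0:ℝ) T, t ≠ τ → HasDerivAt G
      ((-(a t * g (u t)) * g (u t) - φ (u' t) * (g' (u t) * u' t)) / (g (u t))^2) t := by
    intro t ht htτ
    exact (heq t ht htτ).div ((hg' (u t) (hupos t ht)).comp t (hu t ht)) (hgu t ht).ne'
  have hAderiv1 : ∀ t ∈ Ioo (0:ℝ) τ, HasDerivAt A ap t := by
    intro t ht
    have hev : A =ᶠ[nhds t] fun s => ap * s := by
      filter_upwards [isOpen_Iio.mem_nhds (show t ∈ Iio τ from ht.2)] with s hs
      simp only [hAdef]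
      rw [min_eq_left (le_of_lt hs), max_eq_right (by linarith [mem_Iio.1 hs] : s - τ ≤ 0)]
      ring
    have hbase : HasDerivAt (fun s : ℝ => ap * s) ap t := by
      simpa using (hasDerivAt_id t).const_mul ap
    exact hbase.congr_of_eventuallyEq hev
  have hAderiv2 : ∀ t ∈ Ioo τ T, HasDerivAt A (-am) t := by
    intro t ht
    have hev : A =ᶠ[nhds t] fun s => ap * τ - am * (s - τ) := by
      filter_upwards [isOpen_Ioi.mem_nhds (show t ∈ Ioi τ from ht.1)] with s hs
      simp only [hAdef]
      rw [min_eq_right (le_of_lt hs), max_eq_left (by linarith [mem_Ioi.1 hs] : (0:ℝ) ≤ s - τ)]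
    have hbase : HasDerivAt (fun s : ℝ => ap * τ - am * (s - τ)) (-am) t := by
      have h1 : HasDerivAt (fun s : ℝ => am * (s - τ)) am t := by
        simpa using ((hasDerivAt_id t).sub_const τ).const_mul am
      exact ((hasDerivAt_const t (ap * τ)).sub h1).congr_deriv (by ring)
    exact hbase.congr_of_eventuallyEq hev
  have hFderiv1 : ∀ t ∈ Ioo (0:ℝ) τ, HasDerivAt F (W t) t := by
    intro t ht
    have htmem : t ∈ Icc (0:ℝ) T := ⟨ht.1.le, by linarith [ht.2]⟩
    have h1 := (hGderiv t htmem (ne_of_lt ht.2)).add (hAderiv1 t ht)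
    have hat : a t = ap := (ha t).1 ⟨ht.1.le, ht.2⟩
    have hg0 : g (u t) ≠ 0 := (hgu t htmem).ne'
    refine h1.congr_deriv ?_
    simp only [hWdef]
    rw [hat]
    field_simp
    ring
  have hFderiv2 : ∀ t ∈ Ioo τ T, HasDerivAt F (W t) t := by
    intro t ht
    have htmem : t ∈ Icc (0:ℝ) T := ⟨by linarith [ht.1], ht.2.le⟩
    have h1 := (hGderiv t htmem (ne_of_gt ht.1)).add (hAderiv2 t ht)
    have hat : a t = -am := (ha t).2 ⟨ht.1.le, ht.2⟩
    have hg0 : g (u t) ≠ 0 := (hgu t htmem).ne'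
    refine h1.congr_deriv ?_
    simp only [hWdef]
    rw [hat]
    field_simp
    ring
  have hWnonneg : ∀ t ∈ Icc (0:ℝ) T, 0 ≤ W t := by
    intro t ht
    have hsq : (0:ℝ) < (g (u t))^2 := pow_pos (hgu t ht) 2
    simp only [hWdef]
    apply div_nonneg _ hsq.le
    rw [neg_nonneg]
    rcases eq_or_ne (u' t) 0 with h0|h0
    · rw [h0, hφ0]; ring_nf; exact le_rfl
    · have hsign := hφsign (u' t) (hu'Ω t ht) h0
      have hg'n := hg'neg (u t) (hupos t ht)
      nlinarith
  -- F is monotone on [0,τ] and on [τ,T]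
  have hmono1 : ∀ x y : ℝ, 0 ≤ x → x ≤ y → y ≤ τ → F x ≤ F y := by
    intro x y hx hxy hyτ
    rcases eq_or_lt_of_le hxy with rfl|hlt
    · exact le_rfl
    have hsub : Icc x y ⊆ Icc (0:ℝ) T := Icc_subset_Icc hx (by linarith)
    obtain ⟨cc, hcc, hceq⟩ := exists_hasDerivAt_eq_slope F W hlt (hFcont.mono hsub)
      (fun t ht => hFderiv1 t ⟨lt_of_le_of_lt hx ht.1, lt_of_lt_of_le ht.2 hyτ⟩)
    have hW := hWnonneg cc (hsub ⟨hcc.1.le, hcc.2.le⟩)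
    rw [hceq] at hW
    rw [le_div_iff₀ (by linarith : (0:ℝ) < y - x)] at hW
    linarith
  have hmono2 : ∀ x y : ℝ, τ ≤ x → x ≤ y → y ≤ T → F x ≤ F y := by
    intro x y hx hxy hyT
    rcases eq_or_lt_of_le hxy with rfl|hlt
    · exact le_rfl
    have hsub : Icc x y ⊆ Icc (0:ℝ) T := Icc_subset_Icc (by linarith) hyT
    obtain ⟨cc, hcc, hceq⟩ := exists_hasDerivAt_eq_slope F W hlt (hFcont.mono hsub)
      (fun t ht => hFderiv2 t ⟨lt_of_le_of_lt hx ht.1, lt_of_lt_of_le ht.2 hyT⟩)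
    have hW := hWnonneg cc (hsub ⟨hcc.1.le, hcc.2.le⟩)
    rw [hceq] at hW
    rw [le_div_iff₀ (by linarith : (0:ℝ) < y - x)] at hW
    linarith
  -- boundary values
  have hA0 : A 0 = 0 := by
    simp only [hAdef]
    rw [min_eq_left hτ.le, max_eq_right (by linarith : (0:ℝ) - τ ≤ 0)]
    ring
  have hAT : A T = ap * τ - am * (T - τ) := by
    simp only [hAdef]
    rw [min_eq_right hτT.le, max_eq_left (by linarith : (0:ℝ) ≤ T - τ)]
  have hGbd : G 0 = G T := by
    rcases hbc with ⟨h1, h2⟩|⟨h1, h2⟩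
    · simp only [hGdef, h1, h2, hφ0, zero_div]
    · simp only [hGdef, h1, h2]
  -- positivity
  have hpos : 0 < ap * τ - am * (T - τ) := by
    by_contra hle
    push_neg at hle
    have hF0τ : F 0 ≤ F τ := hmono1 0 τ le_rfl hτ.le le_rfl
    have hFτT : F τ ≤ F T := hmono2 τ T le_rfl hτT.le le_rfl
    have hFT0 : F T ≤ F 0 := by
      simp only [hFdef]
      rw [hA0, hAT, ← hGbd]
      linarith
    have hconst : ∀ s ∈ Icc (0:ℝ) τ, F s = F 0 := by
      intro s hs
      have h1 : F 0 ≤ F s := hmono1 0 s le_rfl hs.1 hs.2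
      have h2 : F s ≤ F τ := hmono1 s τ hs.1 hs.2 le_rfl
      linarith
    have hu'0 : ∀ s ∈ Ioo (0:ℝ) τ, u' s = 0 := by
      intro s hs
      have hsmem : s ∈ Icc (0:ℝ) T := ⟨hs.1.le, by linarith [hs.2]⟩
      have hW0 : W s = 0 := by
        have hev : F =ᶠ[nhds s] fun _ => F 0 := by
          filter_upwards [isOpen_Ioo.mem_nhds hs] with t ht
          exact hconst t ⟨ht.1.le, ht.2.le⟩
        have hd0 : HasDerivAt F 0 s :=
          (hasDerivAt_const s (F 0)).congr_of_eventuallyEq hev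
        exact (hFderiv1 s hs).unique hd0
      by_contra h0
      have hsign := hφsign (u' s) (hu'Ω s hsmem) h0
      have hg'n := hg'neg (u s) (hupos s hsmem)
      have hsq : (0:ℝ) < (g (u s))^2 := pow_pos (hgu s hsmem) 2
      simp only [hWdef] at hW0
      rcases div_eq_zero_iff.1 hW0 with h|h
      · nlinarith
      · exact hsq.ne' h
    have h1 : u' (τ/2) = 0 := hu'0 _ ⟨by linarith, by linarith⟩
    have h2 : u' (τ/3) = 0 := hu'0 _ ⟨by linarith, by linarith⟩
    have h3 := hvdec (τ/3) ⟨by linarith, by linarith⟩ (τ/2) ⟨by linarith, by linarith⟩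
      (by linarith)
    rw [h1, h2] at h3
    exact lt_irrefl _ h3
  refine ⟨?_, hpos⟩
  -- integral computation
  have haeτ : ∀ᵐ x ∂(volume : Measure ℝ), x ≠ τ := by
    rw [ae_iff]
    have hset : {x : ℝ | ¬ x ≠ τ} = {τ} := by ext x; simp
    rw [hset]
    exact measure_singleton τ
  have haeT : ∀ᵐ x ∂(volume : Measure ℝ), x ≠ T := by
    rw [ae_iff]
    have hset : {x : ℝ | ¬ x ≠ T} = {T} := by ext x; simp
    rw [hset]
    exact measure_singleton T
  have hae1 : ∀ᵐ x ∂(volume : Measure ℝ), x ∈ Set.uIoc (0:ℝ) τ → a x = ap := by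
    filter_upwards [haeτ] with x hx hmem
    rw [uIoc_of_le hτ.le] at hmem
    exact (ha x).1 ⟨hmem.1.le, lt_of_le_of_ne hmem.2 hx⟩
  have hae2 : ∀ᵐ x ∂(volume : Measure ℝ), x ∈ Set.uIoc τ T → a x = -am := by
    filter_upwards [haeT] with x hx hmem
    rw [uIoc_of_le hτT.le] at hmem
    exact (ha x).2 ⟨hmem.1.le, lt_of_le_of_ne hmem.2 hx⟩
  have hint1 : IntervalIntegrable a volume 0 τ := by
    rw [intervalIntegrable_iff]
    have hc : IntegrableOn (fun _ : ℝ => ap) (Set.uIoc (0:ℝ) τ) volume :=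
      integrableOn_const (by rw [uIoc_of_le hτ.le]; exact measure_Ioc_lt_top.ne)
    exact hc.congr_fun_ae
      ((ae_restrict_iff' measurableSet_uIoc).2 (hae1.mono fun x h hx => (h hx).symm))
  have hint2 : IntervalIntegrable a volume τ T := by
    rw [intervalIntegrable_iff]
    have hc : IntegrableOn (fun _ : ℝ => -am) (Set.uIoc τ T) volume :=
      integrableOn_const (by rw [uIoc_of_le hτT.le]; exact measure_Ioc_lt_top.ne)
    exact hc.congr_fun_ae
      ((ae_restrict_iff' measurableSet_uIoc).2 (hae2.mono fun x h hx => (h hx).symm))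
  have hval1 : ∫ t in (0:ℝ)..τ, a t = ap * τ := by
    rw [integral_congr_ae hae1, intervalIntegral.integral_const, smul_eq_mul]
    ring
  have hval2 : ∫ t in τ..T, a t = -(am * (T - τ)) := by
    rw [integral_congr_ae hae2, intervalIntegral.integral_const, smul_eq_mul]
    ring
  rw [← integral_add_adjacent_intervals hint1 hint2, hval1, hval2]
  ring
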